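/- Suppose χ ≥ 1, 𝒯 \ A is nonempty, and α₄ < min(1, η·α₂), where α₄ = (1/|𝒯∖A|) · Σ_{i ∈ 𝒯∖A} min( max_{j ∈ A} s i j , η·α₂ ). Then χ ≤ ( I(A;𝒬) − |𝒯| · α₄ ) / ( min(1, η·α₂) − α₄ ). -/

import Mathlib

open Finset

theorem stmt_1
    {ι : Type*} [Fintype ι] [DecidableEq ι]
    (s : ι → ι → ℝ)
    (hs : ∀ i j, s i j ∈ Set.Icc (0:ℝ) 1)
    (hsymm : ∀ i j, s i j = s j i)
    (hself : ∀ i, s i i = 1)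
    (T U Q : Finset ι)
    (hTU : Disjoint T U) (hTQ : Disjoint T Q) (hUQ : Disjoint U Q)
    (hQ : Q.Nonempty)
    (A : Finset ι) (hA : A.Nonempty) (hAsub : A ⊆ T ∪ U)
    (η : ℝ) (hη : 0 < η)
    (α₁ β₁ α₂ β₂ : ℝ)
    (hα₁ : ∀ i ∈ U, α₁ ≤ Q.sup' hQ (fun j => s i j))
    (hβ₁ : ∀ i ∈ U, Q.sup' hQ (fun j => s i j) ≤ β₁)
    (hα₂ : ∀ i ∈ T, α₂ ≤ Q.sup' hQ (fun j => s i j))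
    (hβ₂ : ∀ i ∈ T, Q.sup' hQ (fun j => s i j) ≤ β₂)
    (I : ℝ)
    (hI : I = ∑ i ∈ T ∪ U, min (A.sup' hA (fun j => s i j)) (η * Q.sup' hQ (fun j => s i j)))
    (hχ : 1 ≤ (A ∩ T).card)
    (hTA : (T \ A).Nonempty)
    (α₄ : ℝ)
    (hα₄ : α₄ = ((T \ A).card : ℝ)⁻¹ *
      ∑ i ∈ T \ A, min (A.sup' hA (fun j => s i j)) (η * α₂))
    (hlt : α₄ < min 1 (η * α₂)) :
    ((A ∩ T).card : ℝ) ≤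
      (I - (T.card : ℝ) * α₄) / (min 1 (η * α₂) - α₄) := by

  set f : ι → ℝ := fun i => min (A.sup' hA (fun j => s i j)) (η * Q.sup' hQ (fun j => s i j)) with hf
  have hfnonneg : ∀ i, 0 ≤ f i := by
    intro i
    apply le_min
    · obtain ⟨a, ha⟩ := hA
      exact le_trans (hs i a).1 (Finset.le_sup' _ ha)
    · obtain ⟨q, hq⟩ := hQ
      exact mul_nonneg hη.le (le_trans (hs i q).1 (Finset.le_sup' _ hq))
  have h1 : ∑ i ∈ T, f i ≤ I := by
    rw [hI]
    exact Finset.sum_le_sum_of_subset_of_nonneg Finset.subset_union_left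
      (fun i _ _ => hfnonneg i)
  have hsplit : ∑ i ∈ T ∩ A, f i + ∑ i ∈ T \ A, f i = ∑ i ∈ T, f i :=
    Finset.sum_inter_add_sum_sdiff T A f
  set m := min 1 (η * α₂) with hm
  have h2 : ((A ∩ T).card : ℝ) * m ≤ ∑ i ∈ T ∩ A, f i := by
    rw [Finset.inter_comm]
    have hb : ∀ i ∈ T ∩ A, m ≤ f i := by
      intro i hi
      rw [Finset.mem_inter] at hi
      apply le_min
      · refine le_trans (min_le_left _ _) ?_
        have := Finset.le_sup' (fun j => s i j) hi.2
        simp only [hself i] at this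
        exact this
      · exact le_trans (min_le_right _ _)
          (mul_le_mul_of_nonneg_left (hα₂ i hi.1) hη.le)
    calc ((T ∩ A).card : ℝ) * m = (T ∩ A).card • m := (nsmul_eq_mul _ _).symm
      _ ≤ ∑ i ∈ T ∩ A, f i := Finset.card_nsmul_le_sum _ _ _ hb
  have hcard0 : ((T \ A).card : ℝ) ≠ 0 := by
    exact_mod_cast (Finset.card_pos.mpr hTA).ne'
  have h3 : ((T \ A).card : ℝ) * α₄ ≤ ∑ i ∈ T \ A, f i := by
    have hsum : ((T \ A).card : ℝ) * α₄
        = ∑ i ∈ T \ A, min (A.sup' hA (fun j => s i j)) (η * α₂) := by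
      rw [hα₄]
      field_simp
    rw [hsum]
    apply Finset.sum_le_sum
    intro i hi
    have hiT : i ∈ T := (Finset.mem_sdiff.mp hi).1
    exact min_le_min le_rfl (mul_le_mul_of_nonneg_left (hα₂ i hiT) hη.le)
  have hd : ((T \ A).card : ℝ) = (T.card : ℝ) - ((A ∩ T).card : ℝ) := by
    have := Finset.card_sdiff_add_card_inter T A
    rw [Finset.inter_comm] at this
    have h' : ((T \ A).card : ℝ) + ((A ∩ T).card : ℝ) = (T.card : ℝ) := by
      exact_mod_cast congrArg (Nat.cast : ℕ → ℝ) this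
    linarith
  have hpos : 0 < m - α₄ := by linarith [hlt]
  rw [le_div_iff₀ hpos]
  rw [hd] at h3
  nlinarith [h1, h2, h3, hsplit]
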